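/- Consider the discrete-time linear time-invariant system x(k+1) = A x(k) + B u(k), y(k) = C x(k), with A ∈ ℝ^{ns×ns}, B ∈ ℝ^{ns×m}, C ∈ ℝ^{p×ns}. Assume the pair (A, B) is controllable, i.e., the controllability matrix [B, AB, ..., A^{ns-1}B] has rank ns. Let (u^d, y^d) be an input/output trajectory of length T of this system (i.e., there exists a state sequence x^d satisfying the recursions for k = 1, ..., T), and suppose u^d is persistently exciting of order L + ns, i.e., the Hankel matrix 𝓗_{L+ns}(u^d), whose (i,j) block entry is u^d(i+j-1), has full row rank. Then for any L-long input/output pair (u, y), (u, y) is a trajectory of the system (i.e., there exists a state sequence x with x(k+1) = A x(k) + B u(k) and y(k) = C x(k) for k = 1, ..., L) if and only if there exists g ∈ ℝ^{T-L+1} such that 𝓗_L(u^d) g = col(u(1), ..., u(L)) and 𝓗_L(y^d) g = col(y(1), ..., y(L)). -/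
import Mathlib


open Matrix

/-- Hankel matrix of depth `L` (with `T - L + 1` columns) associated with a
vector-valued signal `w`, 0-indexed: block entry `(i, j)` is `w (i + j)`. -/
def hankelMatrix (m L T : ℕ) (w : ℕ → Fin m → ℝ) :
    Matrix (Fin L × Fin m) (Fin (T - L + 1)) ℝ :=
  fun q j => w ((q.1 : ℕ) + (j : ℕ)) q.2

/-- `(u, y)` is an input/output trajectory of length `Len` of the LTI system
`x(k+1) = A x(k) + B u(k)`, `y(k) = C x(k)` (0-indexed time). -/
def IsIOTrajectory (ns m p : ℕ)
    (A : Matrix (Fin ns) (Fin ns) ℝ) (B : Matrix (Fin ns) (Fin m) ℝ)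
    (C : Matrix (Fin p) (Fin ns) ℝ)
    (u : ℕ → Fin m → ℝ) (y : ℕ → Fin p → ℝ) (Len : ℕ) : Prop :=
  ∃ x : ℕ → Fin ns → ℝ,
    (∀ k, k + 1 < Len → x (k + 1) = A.mulVec (x k) + B.mulVec (u k)) ∧
    (∀ k, k < Len → y k = C.mulVec (x k))

/-- Controllability matrix `[B, AB, …, A^{ns-1}B]` of the pair `(A, B)`. -/
def ctrbMatrix (ns m : ℕ)
    (A : Matrix (Fin ns) (Fin ns) ℝ) (B : Matrix (Fin ns) (Fin m) ℝ) :
    Matrix (Fin ns) (Fin ns × Fin m) ℝ :=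
  fun i q => (A ^ (q.1 : ℕ) * B) i q.2

/-- Full row rank implies trivial left kernel. -/
lemma vecMul_eq_zero_of_full_row_rank {R C : Type*} [Fintype R] [Fintype C]
    (M : Matrix R C ℝ) (h : M.rank = Fintype.card R)
    (v : R → ℝ) (hv : v ᵥ* M = 0) : v = 0 := by
  have hT : Mᵀ.rank = Fintype.card R := by rw [Matrix.rank_transpose]; exact h
  have hker : LinearMap.ker (Matrix.mulVecLin Mᵀ) = ⊥ := by
    have h1 := LinearMap.finrank_range_add_finrank_ker (Matrix.mulVecLin Mᵀ)
    have h2 : Module.finrank ℝ (R → ℝ) = Fintype.card R := Module.finrank_pi ℝ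
    rw [Matrix.rank] at hT
    have h3 : Module.finrank ℝ (LinearMap.ker (Matrix.mulVecLin Mᵀ)) = 0 := by omega
    exact Submodule.finrank_eq_zero.mp h3
  have h4 : Matrix.mulVecLin Mᵀ v = 0 := by
    simpa [Matrix.mulVecLin_apply, Matrix.mulVec_transpose] using hv
  exact (LinearMap.ker_eq_bot.mp hker) (by simpa using h4)

/-- Full row rank implies `mulVec` surjective. -/
lemma mulVec_surjective_of_full_row_rank {R C : Type*} [Fintype R] [Fintype C]
    (M : Matrix R C ℝ) (h : M.rank = Fintype.card R) (b : R → ℝ) :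
    ∃ g : C → ℝ, M *ᵥ g = b := by
  have htop : LinearMap.range (Matrix.mulVecLin M) = ⊤ := by
    apply Submodule.eq_top_of_finrank_eq
    rw [← Matrix.rank, h, Module.finrank_pi]
  have hb : b ∈ LinearMap.range (Matrix.mulVecLin M) := htop ▸ Submodule.mem_top
  obtain ⟨g, hg⟩ := hb
  exact ⟨g, hg⟩

/-- State evolution formula. -/
lemma state_evolution {ns m : ℕ} (A : Matrix (Fin ns) (Fin ns) ℝ)
    (B : Matrix (Fin ns) (Fin m) ℝ) (u : ℕ → Fin m → ℝ) (x : ℕ → Fin ns → ℝ) (Len : ℕ)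
    (hx : ∀ k, k + 1 < Len → x (k + 1) = A *ᵥ x k + B *ᵥ u k) :
    ∀ s j, j + s < Len →
      x (j + s) = (A ^ s) *ᵥ x j
        + ∑ i ∈ Finset.range s, (A ^ (s - 1 - i) * B) *ᵥ u (j + i) := by
  intro s
  induction s with
  | zero => intro j _; simp
  | succ s ih =>
      intro j hj
      have h1 : j + s + 1 < Len := by omega
      have h2 : x (j + s + 1) = A *ᵥ x (j + s) + B *ᵥ u (j + s) := hx (j + s) h1
      have h3 := ih j (by omega)
      rw [show j + (s + 1) = j + s + 1 from rfl, h2, h3]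
      rw [Matrix.mulVec_add, Matrix.mulVec_mulVec, ← pow_succ']
      rw [Finset.sum_range_succ]
      have hsum : A *ᵥ (∑ i ∈ Finset.range s, (A ^ (s - 1 - i) * B) *ᵥ u (j + i))
          = ∑ i ∈ Finset.range s, (A ^ (s + 1 - 1 - i) * B) *ᵥ u (j + i) := by
        rw [← Matrix.mulVecLin_apply, map_sum]
        refine Finset.sum_congr rfl fun i hi => ?_
        have hi' : i < s := Finset.mem_range.mp hi
        have he : s + 1 - 1 - i = (s - 1 - i) + 1 := by omega
        rw [Matrix.mulVecLin_apply, Matrix.mulVec_mulVec, he, pow_succ', Matrix.mul_assoc]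
      rw [hsum]
      have h0 : s + 1 - 1 - s = 0 := by omega
      rw [h0, pow_zero, Matrix.one_mul]
      abel

/-- Cayley–Hamilton with explicit coefficients. -/
lemma cayley_coeffs {ns : ℕ} (A : Matrix (Fin ns) (Fin ns) ℝ) :
    (∑ s ∈ Finset.range (ns + 1), (A.charpoly.coeff s) • A ^ s = 0) ∧
      A.charpoly.coeff ns = 1 := by
  constructor
  · have h := Matrix.aeval_self_charpoly A
    rw [Polynomial.aeval_eq_sum_range] at h
    rwa [Matrix.charpoly_natDegree_eq_dim, Fintype.card_fin] at h
  · have := (Matrix.charpoly_monic A).leadingCoeff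
    rwa [Polynomial.leadingCoeff, Matrix.charpoly_natDegree_eq_dim, Fintype.card_fin] at this

lemma sum_dotProduct' {ι n : Type*} [Fintype n] (F : Finset ι) (f : ι → n → ℝ) (w : n → ℝ) :
    (∑ i ∈ F, f i) ⬝ᵥ w = ∑ i ∈ F, f i ⬝ᵥ w := by
  simp only [dotProduct, Finset.sum_apply, Finset.sum_mul]
  exact Finset.sum_comm

lemma dotProduct_sum' {ι n : Type*} [Fintype n] (F : Finset ι) (v : n → ℝ) (f : ι → n → ℝ) :
    v ⬝ᵥ (∑ i ∈ F, f i) = ∑ i ∈ F, v ⬝ᵥ f i := by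
  simp only [dotProduct, Finset.sum_apply, Finset.mul_sum]
  exact Finset.sum_comm

lemma vecMul_sum' {ι R C : Type*} [Fintype R] (F : Finset ι) (v : R → ℝ)
    (M : ι → Matrix R C ℝ) :
    v ᵥ* (∑ i ∈ F, M i) = ∑ i ∈ F, v ᵥ* M i := by
  funext j
  simp only [Matrix.vecMul, dotProduct, Finset.sum_apply, Matrix.sum_apply,
    Finset.mul_sum]
  exact Finset.sum_comm

lemma vecMul_smul_matrix {R C : Type*} [Fintype R] (v : R → ℝ) (b : ℝ) (M : Matrix R C ℝ) :
    v ᵥ* (b • M) = b • (v ᵥ* M) := by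
  funext j
  simp only [Matrix.vecMul, dotProduct, Matrix.smul_apply, Pi.smul_apply,
    smul_eq_mul, Finset.mul_sum]
  exact Finset.sum_congr rfl fun i _ => by ring

lemma left_kernel_trivial
    (ns m T L : ℕ) (hL : 1 ≤ L) (hLT : L + ns < T)
    (A : Matrix (Fin ns) (Fin ns) ℝ) (B : Matrix (Fin ns) (Fin m) ℝ)
    (hctrb : (ctrbMatrix ns m A B).rank = ns)
    (ud : ℕ → Fin m → ℝ) (xd : ℕ → Fin ns → ℝ)
    (hxd : ∀ k, k + 1 < T → xd (k + 1) = A *ᵥ xd k + B *ᵥ ud k)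
    (hPE : (hankelMatrix m (L + ns) T ud).rank = (L + ns) * m)
    (ζ : Fin ns → ℝ) (η : ℕ → Fin m → ℝ) (hηL : ∀ k, L ≤ k → η k = 0)
    (hrel : ∀ j, j ≤ T - L →
      ζ ⬝ᵥ xd j + ∑ k ∈ Finset.range L, η k ⬝ᵥ ud (j + k) = 0) :
    ζ = 0 ∧ ∀ k, η k = 0 := by
  set c : ℕ → ℝ := fun s => A.charpoly.coeff s with hc
  obtain ⟨hCH0, hcns⟩ := cayley_coeffs A
  have hCH : ∑ s ∈ Finset.range (ns + 1), c s • A ^ s = 0 := by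
    simpa [hc] using hCH0
  set φ : ℕ → ℕ → Fin m → ℝ :=
    fun s t => if t < s then ζ ᵥ* (A ^ (s - 1 - t) * B) else η (t - s) with hφ
  set θ : ℕ → Fin m → ℝ :=
    fun t => ∑ s ∈ Finset.range (ns + 1), c s • φ s t with hθdef
  -- Step A : per-shift identity
  have hS : ∀ s, s ≤ ns → ∀ j, j + L + ns ≤ T →
      ∑ t ∈ Finset.range (L + ns), φ s t ⬝ᵥ ud (j + t)
        = -((ζ ᵥ* A ^ s) ⬝ᵥ xd j) := by
    intro s hs j hj
    rw [← Finset.sum_range_add_sum_Ico _ (show s ≤ L + ns by omega)]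
    have hfirst : ∑ t ∈ Finset.range s, φ s t ⬝ᵥ ud (j + t)
        = ζ ⬝ᵥ xd (j + s) - (ζ ᵥ* A ^ s) ⬝ᵥ xd j := by
      have hstate := state_evolution A B ud xd T hxd s j (by omega)
      have h1 : ∀ t ∈ Finset.range s, φ s t ⬝ᵥ ud (j + t)
          = ζ ⬝ᵥ ((A ^ (s - 1 - t) * B) *ᵥ ud (j + t)) := by
        intro t ht
        rw [hφ]
        simp only [if_pos (Finset.mem_range.mp ht)]
        rw [Matrix.dotProduct_mulVec]
      rw [Finset.sum_congr rfl h1, ← dotProduct_sum']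
      have h2 : ∑ t ∈ Finset.range s, (A ^ (s - 1 - t) * B) *ᵥ ud (j + t)
          = xd (j + s) - A ^ s *ᵥ xd j := by
        rw [hstate]; abel
      rw [h2, dotProduct_sub, Matrix.dotProduct_mulVec]
    have hsecond : ∑ t ∈ Finset.Ico s (L + ns), φ s t ⬝ᵥ ud (j + t)
        = -(ζ ⬝ᵥ xd (j + s)) := by
      rw [Finset.sum_Ico_eq_sum_range]
      have h3 : ∀ i ∈ Finset.range (L + ns - s), φ s (s + i) ⬝ᵥ ud (j + (s + i))
          = η i ⬝ᵥ ud ((j + s) + i) := by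
        intro i hi
        rw [hφ]
        simp only [if_neg (by omega : ¬ s + i < s)]
        rw [show s + i - s = i by omega, show j + (s + i) = j + s + i by omega]
      rw [Finset.sum_congr rfl h3]
      rw [← Finset.sum_range_add_sum_Ico _ (show L ≤ L + ns - s by omega)]
      have h4 : ∑ i ∈ Finset.Ico L (L + ns - s), η i ⬝ᵥ ud (j + s + i) = 0 := by
        refine Finset.sum_eq_zero fun i hi => ?_
        rw [hηL i (Finset.mem_Ico.mp hi).1, zero_dotProduct]
      rw [h4, add_zero]
      have h5 := hrel (j + s) (by omega)
      linarith
    rw [hfirst, hsecond]; ring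
  -- Step B : θ vanishes on all windows, hence θ = 0 by persistent excitation
  have hθ0 : ∀ t, t < L + ns → θ t = 0 := by
    have hΘ : (fun q : Fin (L + ns) × Fin m => θ (q.1 : ℕ) q.2)
        ᵥ* hankelMatrix m (L + ns) T ud = 0 := by
      funext j
      have hj : (j : ℕ) + L + ns ≤ T := by
        have := j.isLt
        omega
      show ∑ q : Fin (L + ns) × Fin m, θ (q.1 : ℕ) q.2
          * hankelMatrix m (L + ns) T ud q j = 0
      rw [Fintype.sum_prod_type]
      have e1 : ∀ t : Fin (L + ns), ∑ r, θ (t : ℕ) r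
            * hankelMatrix m (L + ns) T ud (t, r) j
          = θ (t : ℕ) ⬝ᵥ ud ((j : ℕ) + (t : ℕ)) := by
        intro t
        simp only [hankelMatrix, dotProduct]
        rw [show (t : ℕ) + (j : ℕ) = (j : ℕ) + (t : ℕ) by omega]
      rw [Finset.sum_congr rfl fun t _ => e1 t,
        Fin.sum_univ_eq_sum_range (fun t => θ t ⬝ᵥ ud ((j : ℕ) + t)) (L + ns)]
      have e2 : ∀ t ∈ Finset.range (L + ns), θ t ⬝ᵥ ud ((j : ℕ) + t)
          = ∑ s ∈ Finset.range (ns + 1), c s * (φ s t ⬝ᵥ ud ((j : ℕ) + t)) := by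
        intro t _
        rw [hθdef]
        rw [sum_dotProduct']
        exact Finset.sum_congr rfl fun s _ => smul_dotProduct _ _ _
      rw [Finset.sum_congr rfl e2, Finset.sum_comm]
      have e3 : ∀ s ∈ Finset.range (ns + 1),
          ∑ t ∈ Finset.range (L + ns), c s * (φ s t ⬝ᵥ ud ((j : ℕ) + t))
          = -((c s • (ζ ᵥ* A ^ s)) ⬝ᵥ xd (j : ℕ)) := by
        intro s hs
        rw [← Finset.mul_sum, hS s (by
          have := Finset.mem_range.mp hs; omega) (j : ℕ) hj,
          smul_dotProduct, smul_eq_mul]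
        ring
      rw [Finset.sum_congr rfl e3]
      have e5 : ∑ s ∈ Finset.range (ns + 1), -((c s • (ζ ᵥ* A ^ s)) ⬝ᵥ xd (j : ℕ))
          = -((ζ ᵥ* (∑ s ∈ Finset.range (ns + 1), c s • A ^ s)) ⬝ᵥ xd (j : ℕ)) := by
        rw [vecMul_sum', sum_dotProduct', Finset.sum_neg_distrib]
        refine congrArg Neg.neg (Finset.sum_congr rfl fun s _ => ?_)
        rw [vecMul_smul_matrix, smul_dotProduct]
      rw [e5, hCH, Matrix.vecMul_zero, zero_dotProduct, neg_zero]
    have hΘ0 := vecMul_eq_zero_of_full_row_rank _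
      (by simpa using hPE) _ hΘ
    intro t ht
    funext r
    have := congrFun hΘ0 (⟨t, ht⟩, r)
    simpa using this
  -- Step C : η vanishes, by downward induction on the slot index
  have hηstep : ∀ d, ∀ k, L ≤ k + d → η k = 0 := by
    intro d
    induction d with
    | zero => intro k hk; exact hηL k (by omega)
    | succ d ih =>
        intro k hk
        by_cases hkd : L ≤ k + d
        · exact ih k hkd
        · have hθt := hθ0 (k + ns) (by omega)
          have expand : θ (k + ns)
              = ∑ s ∈ Finset.range (ns + 1), c s • η (k + ns - s) := by
            rw [hθdef]
            refine Finset.sum_congr rfl fun s hs => ?_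
            have hs' : s ≤ ns := by have := Finset.mem_range.mp hs; omega
            rw [hφ]
            simp only [if_neg (by omega : ¬ k + ns < s)]
          have hzero : ∀ s ∈ Finset.range ns, c s • η (k + ns - s) = 0 := by
            intro s hs
            have hs' : s < ns := Finset.mem_range.mp hs
            rw [ih (k + ns - s) (by omega), smul_zero]
          have h6 : θ (k + ns) = c ns • η k := by
            rw [expand, Finset.sum_range_succ, Finset.sum_eq_zero hzero, zero_add,
              show k + ns - ns = k by omega]
          have h7 : c ns • η k = 0 := by rw [← h6, hθt]
          simpa [hc, hcns] using h7
  have hη0 : ∀ k, η k = 0 := fun k => hηstep L k (by omega)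
  -- Step D : ζ annihilates the controllability matrix, by strong induction
  have hζAB : ∀ i, i < ns → ζ ᵥ* (A ^ i * B) = 0 := by
    intro i
    induction i using Nat.strong_induction_on with
    | _ i ih =>
      intro hi
      have hθt := hθ0 (ns - 1 - i) (by omega)
      have hpeel : θ (ns - 1 - i)
          = ∑ s ∈ Finset.range ns, c s • φ s (ns - 1 - i) + c ns • φ ns (ns - 1 - i) := by
        rw [hθdef]
        exact Finset.sum_range_succ _ _
      have hzero : ∀ s ∈ Finset.range ns, c s • φ s (ns - 1 - i) = 0 := by
        intro s hs
        have hs' : s < ns := Finset.mem_range.mp hs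
        rw [hφ]
        by_cases h : ns - 1 - i < s
        · simp only [if_pos h]
          rw [ih (s - 1 - (ns - 1 - i)) (by omega) (by omega), smul_zero]
        · simp only [if_neg h]
          rw [hη0, smul_zero]
      have hφns : φ ns (ns - 1 - i) = ζ ᵥ* (A ^ i * B) := by
        rw [hφ]
        simp only [if_pos (show ns - 1 - i < ns by omega)]
        rw [show ns - 1 - (ns - 1 - i) = i by omega]
      have h8 : c ns • (ζ ᵥ* (A ^ i * B)) = 0 := by
        rw [← hφns, ← hθt, hpeel, Finset.sum_eq_zero hzero, zero_add]
      simpa [hc, hcns] using h8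
  have hζctrb : ζ ᵥ* ctrbMatrix ns m A B = 0 := by
    funext q
    have h9 := congrFun (hζAB (q.1 : ℕ) q.1.isLt) q.2
    simpa [ctrbMatrix, Matrix.vecMul, dotProduct] using h9
  have hζ : ζ = 0 := vecMul_eq_zero_of_full_row_rank _ (by simpa using hctrb) _ hζctrb
  exact ⟨hζ, hη0⟩

lemma rank_eq_card_of_left_kernel_trivial {R C : Type*} [Fintype R] [Fintype C]
    (M : Matrix R C ℝ) (h : ∀ v : R → ℝ, v ᵥ* M = 0 → v = 0) :
    M.rank = Fintype.card R := by
  have hinj : Function.Injective (Matrix.mulVecLin Mᵀ) := by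
    rw [← LinearMap.ker_eq_bot, LinearMap.ker_eq_bot']
    intro v hv
    exact h v (by rwa [Matrix.mulVecLin_apply, Matrix.mulVec_transpose] at hv)
  have hT : Mᵀ.rank = Fintype.card R := by
    rw [Matrix.rank, LinearMap.finrank_range_of_inj hinj, Module.finrank_pi]
  rwa [Matrix.rank_transpose] at hT

lemma mulVec_sum_smul {R C ι : Type*} [Fintype C] [Fintype ι]
    (M : Matrix R C ℝ) (g : ι → ℝ) (w : ι → C → ℝ) :
    M *ᵥ (∑ j, g j • w j) = ∑ j, g j • (M *ᵥ w j) := by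
  rw [← Matrix.mulVecLin_apply, map_sum]
  exact Finset.sum_congr rfl fun j _ => by
    rw [Matrix.mulVecLin_apply, Matrix.mulVec_smul]

/-- A linear combination of data trajectories satisfies the state recursion. -/
lemma combo_rec (ns m T L : ℕ) (hLT : L < T)
    (A : Matrix (Fin ns) (Fin ns) ℝ) (B : Matrix (Fin ns) (Fin m) ℝ)
    (ud : ℕ → Fin m → ℝ) (xd : ℕ → Fin ns → ℝ)
    (hxd : ∀ k, k + 1 < T → xd (k + 1) = A *ᵥ xd k + B *ᵥ ud k)
    (g : Fin (T - L + 1) → ℝ) (u : ℕ → Fin m → ℝ)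
    (hgu : (hankelMatrix m L T ud) *ᵥ g = fun q => u (q.1 : ℕ) q.2) :
    ∀ k, k + 1 < L →
      (∑ j, g j • xd (k + 1 + (j : ℕ)))
        = A *ᵥ (∑ j, g j • xd (k + (j : ℕ))) + B *ᵥ u k := by
  intro k hk
  have hstep : ∀ j : Fin (T - L + 1),
      xd (k + 1 + (j : ℕ)) = A *ᵥ xd (k + (j : ℕ)) + B *ᵥ ud (k + (j : ℕ)) := by
    intro j
    have hj := j.isLt
    have h1 := hxd (k + (j : ℕ)) (by omega)
    rw [show k + 1 + (j : ℕ) = (k + (j : ℕ)) + 1 by omega]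
    exact h1
  have huk : ∑ j, g j • ud (k + (j : ℕ)) = u k := by
    funext r
    have h2 := congrFun hgu (⟨k, by omega⟩, r)
    simp only [Matrix.mulVec, dotProduct, hankelMatrix] at h2
    simp only [Finset.sum_apply, Pi.smul_apply, smul_eq_mul]
    rw [← h2]
    exact Finset.sum_congr rfl fun j _ => by ring
  calc ∑ j, g j • xd (k + 1 + (j : ℕ))
      = ∑ j, (g j • (A *ᵥ xd (k + (j : ℕ))) + g j • (B *ᵥ ud (k + (j : ℕ)))) :=
        Finset.sum_congr rfl fun j _ => by rw [hstep j, smul_add]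
    _ = ∑ j, g j • (A *ᵥ xd (k + (j : ℕ)))
          + ∑ j, g j • (B *ᵥ ud (k + (j : ℕ))) := Finset.sum_add_distrib
    _ = A *ᵥ (∑ j, g j • xd (k + (j : ℕ))) + B *ᵥ (∑ j, g j • ud (k + (j : ℕ))) := by
        rw [mulVec_sum_smul, mulVec_sum_smul]
    _ = A *ᵥ (∑ j, g j • xd (k + (j : ℕ))) + B *ᵥ u k := by rw [huk]

/-- The output Hankel combination equals the output of the combined state. -/
lemma combo_out (ns p T L : ℕ) (hLT : L < T)
    (C : Matrix (Fin p) (Fin ns) ℝ)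
    (yd : ℕ → Fin p → ℝ) (xd : ℕ → Fin ns → ℝ)
    (hyd : ∀ k, k < T → yd k = C *ᵥ xd k)
    (g : Fin (T - L + 1) → ℝ) :
    ∀ (k : Fin L) (r : Fin p),
      (hankelMatrix p L T yd *ᵥ g) (k, r)
        = (C *ᵥ (∑ j, g j • xd ((k : ℕ) + (j : ℕ)))) r := by
  intro k r
  have hself : ∀ j : Fin (T - L + 1), yd ((k : ℕ) + (j : ℕ)) = C *ᵥ xd ((k : ℕ) + (j : ℕ)) := by
    intro j
    have := j.isLt
    have := k.isLt
    exact hyd _ (by omega)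
  calc (hankelMatrix p L T yd *ᵥ g) (k, r)
      = ∑ j : Fin (T - L + 1), (C *ᵥ xd ((k : ℕ) + (j : ℕ))) r * g j := by
        simp only [Matrix.mulVec, dotProduct, hankelMatrix]
        exact Finset.sum_congr rfl fun j _ => by rw [hself j]; rfl
    _ = (C *ᵥ ∑ j, g j • xd ((k : ℕ) + (j : ℕ))) r := by
        rw [mulVec_sum_smul]
        simp only [Finset.sum_apply, Pi.smul_apply, smul_eq_mul]
        exact Finset.sum_congr rfl fun j _ => by ring

/-- Willems' fundamental lemma (data-driven representation used by DeeP-LCC):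
for a controllable LTI system and pre-collected data `(u^d, y^d)` of length `T`
whose input is persistently exciting of order `L + ns`, a length-`L` pair
`(u, y)` is a system trajectory iff it is a linear combination (via `g`) of the
columns of the depth-`L` Hankel matrices of the data. -/
theorem fundamental_lemma_data_driven_representation
    (ns m p T L : ℕ) (hLT : L + ns < T)
    (A : Matrix (Fin ns) (Fin ns) ℝ) (B : Matrix (Fin ns) (Fin m) ℝ)
    (C : Matrix (Fin p) (Fin ns) ℝ)
    (hctrb : (ctrbMatrix ns m A B).rank = ns)
    (ud : ℕ → Fin m → ℝ) (yd : ℕ → Fin p → ℝ)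
    (hdata : IsIOTrajectory ns m p A B C ud yd T)
    (hPE : (hankelMatrix m (L + ns) T ud).rank = (L + ns) * m)
    (u : ℕ → Fin m → ℝ) (y : ℕ → Fin p → ℝ) :
    IsIOTrajectory ns m p A B C u y L ↔
      ∃ g : Fin (T - L + 1) → ℝ,
        (hankelMatrix m L T ud).mulVec g = (fun q => u (q.1 : ℕ) q.2) ∧
        (hankelMatrix p L T yd).mulVec g = (fun q => y (q.1 : ℕ) q.2) := by
  obtain ⟨xd, hxd, hyd⟩ := hdata
  have hyd' : ∀ k, k < T → yd k = C *ᵥ xd k := hyd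
  by_cases hL0 : L = 0
  · subst hL0
    constructor
    · intro _
      exact ⟨0, funext fun q => q.1.elim0, funext fun q => q.1.elim0⟩
    · intro _
      exact ⟨fun _ => 0, fun k hk => absurd hk (by omega), fun k hk => absurd hk (by omega)⟩
  have hL : 1 ≤ L := by omega
  constructor
  · -- trajectory → combination
    rintro ⟨x, hxrec, hyout⟩
    -- the stacked (state, input-Hankel) matrix
    set Mstk : Matrix (Fin ns ⊕ (Fin L × Fin m)) (Fin (T - L + 1)) ℝ :=
      fun s j => Sum.rec (fun i => xd (j : ℕ) i)
        (fun q => hankelMatrix m L T ud q j) s with hMstk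
    have hker : ∀ v : (Fin ns ⊕ (Fin L × Fin m)) → ℝ, v ᵥ* Mstk = 0 → v = 0 := by
      intro v hv
      have hrel : ∀ jn, jn ≤ T - L →
          (fun i => v (Sum.inl i)) ⬝ᵥ xd jn
            + ∑ k ∈ Finset.range L,
              (fun r => if h : k < L then v (Sum.inr (⟨k, h⟩, r)) else 0) ⬝ᵥ ud (jn + k)
            = 0 := by
        intro jn hjn
        have hcol := congrFun hv ⟨jn, by omega⟩
        simp only [Matrix.vecMul, dotProduct, Pi.zero_apply] at hcol
        rw [Fintype.sum_sum_type, Fintype.sum_prod_type] at hcol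
        have e : ∑ k ∈ Finset.range L,
            (fun r => if h : k < L then v (Sum.inr (⟨k, h⟩, r)) else 0) ⬝ᵥ ud (jn + k)
            = ∑ k : Fin L, ∑ r : Fin m,
                v (Sum.inr (k, r)) * Mstk (Sum.inr (k, r)) ⟨jn, by omega⟩ := by
          rw [← Fin.sum_univ_eq_sum_range (fun k =>
            (fun r => if h : k < L then v (Sum.inr (⟨k, h⟩, r)) else 0) ⬝ᵥ ud (jn + k)) L]
          refine Finset.sum_congr rfl fun k _ => ?_
          simp only [dotProduct, dif_pos k.isLt, Fin.eta]
          refine Finset.sum_congr rfl fun r _ => ?_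
          have : Mstk (Sum.inr (k, r)) ⟨jn, by omega⟩ = ud ((k : ℕ) + jn) r := rfl
          rw [this, show (k : ℕ) + jn = jn + (k : ℕ) by omega]
        rw [e]
        have e2 : (fun i => v (Sum.inl i)) ⬝ᵥ xd jn
            = ∑ i, v (Sum.inl i) * Mstk (Sum.inl i) ⟨jn, by omega⟩ := rfl
        rw [e2]
        exact hcol
      obtain ⟨hζ0, hη0⟩ := left_kernel_trivial ns m T L hL hLT A B hctrb ud xd hxd hPE
        (fun i => v (Sum.inl i))
        (fun k r => if h : k < L then v (Sum.inr (⟨k, h⟩, r)) else 0)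
        (fun k hk => by
          funext r
          simp [dif_neg (by omega : ¬ k < L)])
        hrel
      funext s
      cases s with
      | inl i => exact congrFun hζ0 i
      | inr q =>
          have h10 := congrFun (hη0 (q.1 : ℕ)) q.2
          simpa [dif_pos q.1.isLt, Fin.eta] using h10
    have hrank := rank_eq_card_of_left_kernel_trivial Mstk hker
    obtain ⟨g, hg⟩ := mulVec_surjective_of_full_row_rank Mstk hrank
      (Sum.elim (x 0) (fun q : Fin L × Fin m => u (q.1 : ℕ) q.2))
    have hgu : (hankelMatrix m L T ud) *ᵥ g = fun q => u (q.1 : ℕ) q.2 :=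
      funext fun q => congrFun hg (Sum.inr q)
    have hgx : ∀ i, (∑ j, g j • xd (0 + (j : ℕ))) i = x 0 i := by
      intro i
      have h11 := congrFun hg (Sum.inl i)
      simp only [Matrix.mulVec, dotProduct, Sum.elim_inl] at h11
      simp only [Finset.sum_apply, Pi.smul_apply, smul_eq_mul]
      rw [← h11]
      exact Finset.sum_congr rfl fun j _ => by rw [zero_add]; ring
    have hzx : ∀ k, k < L → (∑ j, g j • xd (k + (j : ℕ))) = x k := by
      intro k
      induction k with
      | zero => intro _; exact funext hgx
      | succ k ih =>
          intro hk
          rw [combo_rec ns m T L (by omega) A B ud xd hxd g u hgu k hk, ih (by omega),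
            ← hxrec k hk]
    refine ⟨g, hgu, ?_⟩
    funext q
    obtain ⟨k, r⟩ := q
    rw [combo_out ns p T L (by omega) C yd xd hyd' g k r, hzx (k : ℕ) k.isLt,
      ← hyout (k : ℕ) k.isLt]
  · -- combination → trajectory
    rintro ⟨g, hgu, hgy⟩
    refine ⟨fun k => ∑ j, g j • xd (k + (j : ℕ)), ?_, ?_⟩
    · intro k hk
      exact combo_rec ns m T L (by omega) A B ud xd hxd g u hgu k hk
    · intro k hk
      funext r
      have h12 := congrFun hgy (⟨k, hk⟩, r)
      rw [combo_out ns p T L (by omega) C yd xd hyd' g ⟨k, hk⟩ r] at h12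
      exact h12.symm
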